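/- Let H be a finite group with subgroups X and Y such that X ≅ Y ≅ C_2^n, H = ⟨X ∪ Y⟩, and H/H' ≅ C_2^{2n} (an n-dimensional mixed dihedral group). Then X ∩ Y = 1. -/

import Mathlib

/-- If `H` is an `n`-dimensional mixed dihedral group relative to `X` and `Y`
(i.e. `X ≅ Y ≅ C₂ⁿ`, `H = ⟨X ∪ Y⟩`, and `H/H' ≅ C₂^{2n}`), then `X ∩ Y = 1`. -/
theorem mixed_dihedral_inf_eq_bot {H : Type*} [Group H] [Fintype H]
    (n : ℕ) (hn : 1 ≤ n) (X Y : Subgroup H)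
    (hX : Nonempty (X ≃* (Fin n → Multiplicative (ZMod 2))))
    (hY : Nonempty (Y ≃* (Fin n → Multiplicative (ZMod 2))))
    (hgen : Subgroup.closure ((X : Set H) ∪ (Y : Set H)) = ⊤)
    (hab : Nonempty ((H ⧸ commutator H) ≃* (Fin (2 * n) → Multiplicative (ZMod 2)))) :
    X ⊓ Y = ⊥ := by
  letI : CommGroup (H ⧸ commutator H) := Abelianization.commGroup H
  obtain ⟨eX⟩ := hX
  obtain ⟨eY⟩ := hY
  obtain ⟨eA⟩ := hab
  have cardPi : ∀ m : ℕ, Nat.card (Fin m → Multiplicative (ZMod 2)) = 2 ^ m := by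
    intro m
    simp [Nat.card_pi, Nat.card_eq_fintype_card]
  have cardX : Nat.card X = 2 ^ n := (Nat.card_congr eX.toEquiv).trans (cardPi n)
  have cardY : Nat.card Y = 2 ^ n := (Nat.card_congr eY.toEquiv).trans (cardPi n)
  have cardA : Nat.card (H ⧸ commutator H) = 2 ^ (2 * n) :=
    (Nat.card_congr eA.toEquiv).trans (cardPi (2 * n))
  have hsup : X ⊔ Y = ⊤ := by
    rw [← hgen, Subgroup.closure_union, Subgroup.closure_eq, Subgroup.closure_eq]
  set π : H →* H ⧸ commutator H := QuotientGroup.mk' (commutator H) with hπ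
  have hπsurj : Function.Surjective π := QuotientGroup.mk'_surjective _
  set XA := X.map π with hXA
  set YA := Y.map π with hYA
  have hsupA : XA ⊔ YA = ⊤ := by
    rw [hXA, hYA, ← Subgroup.map_sup, hsup, ← MonoidHom.range_eq_map,
      MonoidHom.range_eq_top_of_surjective _ hπsurj]
  -- surjection from X onto XA
  have surjX : Function.Surjective (fun x : X => (⟨π x, Subgroup.mem_map_of_mem π x.2⟩ : XA)) := by
    rintro ⟨_, x, hx, rfl⟩
    exact ⟨⟨x, hx⟩, rfl⟩
  have surjY : Function.Surjective (fun y : Y => (⟨π y, Subgroup.mem_map_of_mem π y.2⟩ : YA)) := by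
    rintro ⟨_, y, hy, rfl⟩
    exact ⟨⟨y, hy⟩, rfl⟩
  have cardXA : Nat.card XA ≤ 2 ^ n := cardX ▸ Nat.card_le_card_of_surjective _ surjX
  have cardYA : Nat.card YA ≤ 2 ^ n := cardY ▸ Nat.card_le_card_of_surjective _ surjY
  -- the multiplication map
  set f : XA × YA →* H ⧸ commutator H := (XA.subtype).coprod (YA.subtype) with hf
  have hfsurj : Function.Surjective f := by
    intro a
    have ha : a ∈ XA ⊔ YA := hsupA ▸ Subgroup.mem_top a
    rw [Subgroup.mem_sup] at ha
    obtain ⟨y, hy, z, hz, hyz⟩ := ha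
    exact ⟨(⟨y, hy⟩, ⟨z, hz⟩), hyz⟩
  have cardProd : Nat.card (XA × YA) = Nat.card XA * Nat.card YA := Nat.card_prod _ _
  have hle : 2 ^ (2 * n) ≤ Nat.card XA * Nat.card YA := by
    rw [← cardProd, ← cardA]
    exact Nat.card_le_card_of_surjective f hfsurj
  have h2n : (2 : ℕ) ^ (2 * n) = 2 ^ n * 2 ^ n := by rw [two_mul, pow_add]
  have hpos : 0 < (2 : ℕ) ^ n := Nat.pow_pos (n := n) (by norm_num)
  have hXAeq : Nat.card XA = 2 ^ n := by
    refine le_antisymm cardXA ?_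
    have h3 : 2 ^ n * 2 ^ n ≤ Nat.card XA * 2 ^ n := by
      calc 2 ^ n * 2 ^ n = 2 ^ (2 * n) := h2n.symm
        _ ≤ Nat.card XA * Nat.card YA := hle
        _ ≤ Nat.card XA * 2 ^ n := Nat.mul_le_mul_left _ cardYA
    exact Nat.le_of_mul_le_mul_right h3 hpos
  have hYAeq : Nat.card YA = 2 ^ n := by
    refine le_antisymm cardYA ?_
    have h3 : 2 ^ n * 2 ^ n ≤ 2 ^ n * Nat.card YA := by
      calc 2 ^ n * 2 ^ n = 2 ^ (2 * n) := h2n.symm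
        _ ≤ Nat.card XA * Nat.card YA := hle
        _ ≤ 2 ^ n * Nat.card YA := Nat.mul_le_mul_right _ cardXA
    exact Nat.le_of_mul_le_mul_left h3 hpos
  -- f is injective since it's a surjection between sets of equal finite cardinality
  have hfinj : Function.Injective f := by
    have hcard : Nat.card (XA × YA) = Nat.card (H ⧸ commutator H) := by
      rw [cardProd, hXAeq, hYAeq, cardA, two_mul, pow_add]
    have : Function.Bijective f :=
      (Nat.bijective_iff_surjective_and_card f).mpr ⟨hfsurj, hcard⟩
    exact this.1
  have hinfA : XA ⊓ YA = ⊥ := by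
    rw [Subgroup.eq_bot_iff_forall]
    intro a ha
    have h1 : f (⟨a, ha.1⟩, ⟨a⁻¹, YA.inv_mem ha.2⟩) = f (1, 1) := by
      simp [hf, MonoidHom.coprod_apply]
    have := hfinj h1
    have : (⟨a, ha.1⟩ : XA) = 1 := (Prod.mk.injEq _ _ _ _ ▸ this).1
    exact Subtype.ext_iff.mp this
  -- π is injective on X
  set g : X →* H ⧸ commutator H := π.comp X.subtype with hg
  have hrange : g.range = XA := by
    rw [hg, MonoidHom.range_comp, Subgroup.range_subtype]
  have hkerg : g.ker = ⊥ := by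
    have h1 : Nat.card X = Nat.card (X ⧸ g.ker) * Nat.card g.ker :=
      Subgroup.card_eq_card_quotient_mul_card_subgroup _
    have h2 : Nat.card (X ⧸ g.ker) = Nat.card g.range :=
      Nat.card_congr (QuotientGroup.quotientKerEquivRange g).toEquiv
    have h3 : Nat.card g.range = 2 ^ n := by rw [hrange, hXAeq]
    rw [h2, h3, cardX] at h1
    have hker1 : Nat.card g.ker = 1 := by
      have := h1.symm
      exact (Nat.mul_eq_left hpos.ne').mp this
    exact Subgroup.eq_bot_of_card_eq _ hker1
  have hginj : Function.Injective g := (MonoidHom.ker_eq_bot_iff g).mp hkerg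
  rw [Subgroup.eq_bot_iff_forall]
  intro x hx
  have hπx : π x ∈ XA ⊓ YA :=
    ⟨Subgroup.mem_map_of_mem π hx.1, Subgroup.mem_map_of_mem π hx.2⟩
  rw [hinfA, Subgroup.mem_bot] at hπx
  have : g ⟨x, hx.1⟩ = g 1 := by simpa [hg] using hπx
  exact Subtype.ext_iff.mp (hginj this)
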